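/- Let A be a unital commutative real algebra, L : A → ℝ linear positive semidefinite with L(1) = 1, and suppose C_a = sup_{n≥1}(L(a^{2n}))^{1/(2n)} is finite for all a ∈ A. Then for every a ∈ A, C_a ≥ D_a and −C_a ≤ d_a, where D_a and d_a are the supremum and infimum of L(ax²)/L(x²) over x with L(x²) ≠ 0; moreover at least one of C_a = D_a or C_a = −d_a holds. -/

import Mathlib

/-- The set of values `(L(a^{2n}))^{1/(2n)}`, `n ≥ 1`. -/
def Cset {A : Type*} [CommRing A] [Algebra ℝ A] (L : A →ₗ[ℝ] ℝ) (a : A) : Set ℝ :=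
  {x : ℝ | ∃ n : ℕ, 1 ≤ n ∧ x = (L (a ^ (2 * n))) ^ (((2 * n : ℕ) : ℝ))⁻¹}

/-- The set of Rayleigh quotients of `L` at `a`. -/
def Rayleigh {A : Type*} [CommRing A] [Algebra ℝ A] (L : A →ₗ[ℝ] ℝ) (a : A) : Set ℝ :=
  {r : ℝ | ∃ x : A, L (x ^ 2) ≠ 0 ∧ r = L (a * x ^ 2) / L (x ^ 2)}

section CSAux
variable {A : Type*} [CommRing A] [Algebra ℝ A]

/-- Cauchy–Schwarz inequality for a positive semidefinite linear functional. -/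
theorem L_cs (L : A →ₗ[ℝ] ℝ) (hpsd : ∀ x : A, 0 ≤ L (x ^ 2)) (u v : A) :
    (L (u * v)) ^ 2 ≤ L (u ^ 2) * L (v ^ 2) := by
  have key : ∀ t : ℝ, 0 ≤ L (v ^ 2) * (t * t) + (2 * L (u * v)) * t + L (u ^ 2) := by
    intro t
    have hexp : (u + t • v) ^ 2 = u ^ 2 + (t • (u * v) + t • (u * v)) + (t * t) • v ^ 2 := by
      simp only [sq, add_mul, mul_add, smul_add, mul_smul_comm, smul_mul_assoc, smul_smul]
      rw [mul_comm v u]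
      abel
    have h0 := hpsd (u + t • v)
    rw [hexp] at h0
    simp only [map_add, map_smul, smul_eq_mul] at h0
    nlinarith [h0]
  have hd := discrim_le_zero key
  rw [discrim] at hd
  nlinarith [hd]

end CSAux

theorem stmt_11 {A : Type*} [CommRing A] [Algebra ℝ A]
    (L : A →ₗ[ℝ] ℝ) (hpsd : ∀ x : A, 0 ≤ L (x ^ 2)) (hone : L 1 = 1)
    (hfin : ∀ a : A, BddAbove (Cset L a)) :
    ∀ a : A,
      BddAbove (Rayleigh L a) ∧ BddBelow (Rayleigh L a) ∧
        sSup (Rayleigh L a) ≤ sSup (Cset L a) ∧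
        -(sSup (Cset L a)) ≤ sInf (Rayleigh L a) ∧
        (sSup (Cset L a) = sSup (Rayleigh L a) ∨
          sSup (Cset L a) = -(sInf (Rayleigh L a))) := by
  intro a
  have cs := L_cs L hpsd
  have hsq : ∀ x : A, L (x ^ 2) ≠ 0 → 0 < L (x ^ 2) :=
    fun x h => lt_of_le_of_ne (hpsd x) (Ne.symm h)
  -- vanishing of mixed moments on the kernel
  have hker : ∀ b z : A, L (z ^ 2) = 0 → L (b * z ^ 2) = 0 := by
    intro b z hz
    have h := cs (b * z) z
    rw [show (b * z) * z = b * z ^ 2 from by ring] at h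
    rw [hz, mul_zero] at h
    have h2 : (L (b * z ^ 2)) ^ 2 = 0 := le_antisymm h (sq_nonneg _)
    exact pow_eq_zero_iff (two_ne_zero) |>.1 h2
  set C := sSup (Cset L a) with hCdef
  have hCset_ne : (Cset L a).Nonempty := ⟨_, 1, le_refl 1, rfl⟩
  have hmom_nonneg : ∀ n : ℕ, 0 ≤ L (a ^ (2 * n)) := by
    intro n
    rw [pow_mul']
    exact hpsd _
  have hCnonneg : 0 ≤ C := by
    have h1 : (L (a ^ (2 * 1))) ^ (((2 * 1 : ℕ) : ℝ))⁻¹ ∈ Cset L a := ⟨1, le_refl 1, rfl⟩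
    have h2 := le_csSup (hfin a) h1
    have h0 : 0 ≤ (L (a ^ (2 * 1))) ^ (((2 * 1 : ℕ) : ℝ))⁻¹ :=
      Real.rpow_nonneg (hmom_nonneg 1) _
    linarith
  have hmom_le : ∀ n : ℕ, 1 ≤ n → L (a ^ (2 * n)) ≤ C ^ (2 * n) := by
    intro n hn
    have hmem : (L (a ^ (2 * n))) ^ (((2 * n : ℕ) : ℝ))⁻¹ ∈ Cset L a := ⟨n, hn, rfl⟩
    have hle := le_csSup (hfin a) hmem
    have h2n : (2 * n : ℕ) ≠ 0 := by omega
    calc L (a ^ (2 * n))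
        = ((L (a ^ (2 * n))) ^ (((2 * n : ℕ) : ℝ))⁻¹) ^ (2 * n) :=
          (Real.rpow_inv_natCast_pow (hmom_nonneg n) h2n).symm
      _ ≤ C ^ (2 * n) := pow_le_pow_left₀ (Real.rpow_nonneg (hmom_nonneg n) _) hle _
  -- Part 1 : |L(a x²)| ≤ C · L(x²)
  have habs : ∀ x : A, L (x ^ 2) ≠ 0 → |L (a * x ^ 2)| ≤ C * L (x ^ 2) := by
    intro x hx0
    have hQ : 0 < L (x ^ 2) := hsq x hx0
    set r := |L (a * x ^ 2)| with hrdef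
    set Q := L (x ^ 2) with hQdef
    set S := Real.sqrt (L ((x ^ 2) ^ 2)) with hSdef
    have hS0 : 0 ≤ S := Real.sqrt_nonneg _
    have base2 : r ^ 2 * Q ≤ L (a ^ 2 * x ^ 2) * Q ^ 2 := by
      have h1 := cs (a * x) x
      rw [show (a * x) * x = a * x ^ 2 from by ring,
        show (a * x) ^ 2 = a ^ 2 * x ^ 2 from by ring] at h1
      have hr2 : r ^ 2 = (L (a * x ^ 2)) ^ 2 := sq_abs _
      calc r ^ 2 * Q = (L (a * x ^ 2)) ^ 2 * Q := by rw [hr2]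
        _ ≤ (L (a ^ 2 * x ^ 2) * Q) * Q := mul_le_mul_of_nonneg_right h1 hQ.le
        _ = L (a ^ 2 * x ^ 2) * Q ^ 2 := by ring
    have step : ∀ m : ℕ, r ^ m * Q ≤ L (a ^ m * x ^ 2) * Q ^ m →
        r ^ (2 * m) * Q ≤ L (a ^ (2 * m) * x ^ 2) * Q ^ (2 * m) := by
      intro m ihm
      have hcs2 := cs (a ^ m * x) x
      rw [show (a ^ m * x) * x = a ^ m * x ^ 2 from by ring,
        show (a ^ m * x) ^ 2 = a ^ (2 * m) * x ^ 2 from by rw [mul_pow, ← pow_mul']] at hcs2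
      have hfirst : (r ^ m * Q) * (r ^ m * Q)
          ≤ (L (a ^ m * x ^ 2) * Q ^ m) * (L (a ^ m * x ^ 2) * Q ^ m) :=
        mul_self_le_mul_self (by positivity) ihm
      have h3 : (r ^ m) ^ 2 * Q * Q ≤ L (a ^ (2 * m) * x ^ 2) * (Q ^ m) ^ 2 * Q := by
        calc (r ^ m) ^ 2 * Q * Q = (r ^ m * Q) * (r ^ m * Q) := by ring
          _ ≤ (L (a ^ m * x ^ 2) * Q ^ m) * (L (a ^ m * x ^ 2) * Q ^ m) := hfirst
          _ = (L (a ^ m * x ^ 2)) ^ 2 * (Q ^ m) ^ 2 := by ring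
          _ ≤ (L (a ^ (2 * m) * x ^ 2) * Q) * (Q ^ m) ^ 2 :=
            mul_le_mul_of_nonneg_right hcs2 (sq_nonneg _)
          _ = L (a ^ (2 * m) * x ^ 2) * (Q ^ m) ^ 2 * Q := by ring
      have h4 := le_of_mul_le_mul_right h3 hQ
      calc r ^ (2 * m) * Q = (r ^ m) ^ 2 * Q := by rw [pow_mul']
        _ ≤ L (a ^ (2 * m) * x ^ 2) * (Q ^ m) ^ 2 := h4
        _ = L (a ^ (2 * m) * x ^ 2) * Q ^ (2 * m) := by rw [← pow_mul']
    have ind : ∀ k : ℕ, r ^ (2 ^ (k + 1)) * Q ≤ L (a ^ (2 ^ (k + 1)) * x ^ 2) * Q ^ (2 ^ (k + 1)) := by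
      intro k
      induction k with
      | zero => simpa using base2
      | succ k ih =>
        have h := step (2 ^ (k + 1)) ih
        have e : (2 : ℕ) ^ (k + 1 + 1) = 2 * 2 ^ (k + 1) := by ring
        rw [e]
        exact h
    have hGm : ∀ m : ℕ, 1 ≤ m → L (a ^ m * x ^ 2) ≤ C ^ m * S := by
      intro m hm
      have h1 := cs (a ^ m) (x ^ 2)
      rw [show (a ^ m) ^ 2 = a ^ (2 * m) from (pow_mul' a 2 m).symm] at h1
      have hx4 : 0 ≤ L ((x ^ 2) ^ 2) := hpsd (x ^ 2)
      have h2 : (L (a ^ m * x ^ 2)) ^ 2 ≤ (C ^ m * S) ^ 2 := by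
        calc (L (a ^ m * x ^ 2)) ^ 2 ≤ L (a ^ (2 * m)) * L ((x ^ 2) ^ 2) := h1
          _ ≤ C ^ (2 * m) * L ((x ^ 2) ^ 2) :=
            mul_le_mul_of_nonneg_right (hmom_le m hm) hx4
          _ = (C ^ m * S) ^ 2 := by rw [mul_pow, Real.sq_sqrt hx4, pow_mul' C 2 m]
      have h3 := Real.sqrt_le_sqrt h2
      rw [Real.sqrt_sq_eq_abs, Real.sqrt_sq_eq_abs] at h3
      calc L (a ^ m * x ^ 2) ≤ |L (a ^ m * x ^ 2)| := le_abs_self _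
        _ ≤ |C ^ m * S| := h3
        _ = C ^ m * S := abs_of_nonneg (mul_nonneg (pow_nonneg hCnonneg m) hS0)
    have hmain : ∀ k : ℕ, r ^ (2 ^ (k + 1)) * Q ≤ C ^ (2 ^ (k + 1)) * S * Q ^ (2 ^ (k + 1)) := by
      intro k
      refine le_trans (ind k) ?_
      have := mul_le_mul_of_nonneg_right (hGm (2 ^ (k + 1)) Nat.one_le_two_pow)
        (pow_nonneg hQ.le (2 ^ (k + 1)))
      linarith
    rcases eq_or_lt_of_le hCnonneg with hc0 | hc0
    · -- C = 0
      have h0 := hmain 0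
      rw [← hc0] at h0 ⊢
      norm_num at h0 ⊢
      have hr2 : r ^ 2 ≤ 0 := by nlinarith [h0, hQ]
      have hr0 : r ^ 2 = 0 := le_antisymm hr2 (sq_nonneg r)
      have hrz : r = 0 := pow_eq_zero_iff (two_ne_zero) |>.1 hr0
      exact le_of_eq hrz
    · -- C > 0
      by_contra hcon
      push_neg at hcon
      have hCQ : 0 < C * Q := mul_pos hc0 hQ
      set t := r / (C * Q) with htdef
      have ht : 1 < t := (one_lt_div hCQ).2 hcon
      obtain ⟨n, hn⟩ := pow_unbounded_of_one_lt (S / Q) ht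
      have hnm : n ≤ 2 ^ (n + 1) :=
        le_trans (Nat.lt_two_pow_self (n := n)).le (Nat.pow_le_pow_right (by norm_num) (Nat.le_succ n))
      have htm : t ^ n ≤ t ^ (2 ^ (n + 1)) := pow_le_pow_right₀ ht.le hnm
      have hend : t ^ (2 ^ (n + 1)) ≤ S / Q := by
        rw [htdef, div_pow, div_le_div_iff₀ (pow_pos hCQ _) hQ]
        calc r ^ (2 ^ (n + 1)) * Q ≤ C ^ (2 ^ (n + 1)) * S * Q ^ (2 ^ (n + 1)) := hmain n
          _ = S * (C * Q) ^ (2 ^ (n + 1)) := by rw [mul_pow]; ring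
      linarith
  -- Part 1 conclusions
  have hRay_ne : (Rayleigh L a).Nonempty :=
    ⟨_, 1, by rw [one_pow, hone]; exact one_ne_zero, rfl⟩
  have hub : ∀ r ∈ Rayleigh L a, r ≤ C := by
    rintro r ⟨x, hx, rfl⟩
    have hQ := hsq x hx
    rw [div_le_iff₀ hQ]
    calc L (a * x ^ 2) ≤ |L (a * x ^ 2)| := le_abs_self _
      _ ≤ C * L (x ^ 2) := habs x hx
  have hlb : ∀ r ∈ Rayleigh L a, -C ≤ r := by
    rintro r ⟨x, hx, rfl⟩
    have hQ := hsq x hx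
    rw [le_div_iff₀ hQ]
    have h1 : -(C * L (x ^ 2)) ≤ L (a * x ^ 2) := neg_le_of_abs_le (habs x hx)
    linarith
  have hbddA : BddAbove (Rayleigh L a) := ⟨C, hub⟩
  have hbddB : BddBelow (Rayleigh L a) := ⟨-C, hlb⟩
  have hsupC : sSup (Rayleigh L a) ≤ C := csSup_le hRay_ne hub
  have hinfC : -C ≤ sInf (Rayleigh L a) := le_csInf hRay_ne hlb
  -- Part 3
  set M := max (sSup (Rayleigh L a)) (-(sInf (Rayleigh L a))) with hMdef
  have hmem1 : L (a * 1 ^ 2) / L (1 ^ 2) ∈ Rayleigh L a :=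
    ⟨1, by rw [one_pow, hone]; exact one_ne_zero, rfl⟩
  have hM0 : 0 ≤ M := by
    have h1 := le_csSup hbddA hmem1
    have h2 := csInf_le hbddB hmem1
    rcases le_total 0 (L (a * 1 ^ 2) / L (1 ^ 2)) with h | h
    · exact le_trans h (le_trans h1 (le_max_left _ _))
    · have h3 : 0 ≤ -(sInf (Rayleigh L a)) := by linarith
      exact le_trans h3 (le_max_right _ _)
  have hMabs : ∀ z : A, |L (a * z ^ 2)| ≤ M * L (z ^ 2) := by
    intro z
    by_cases hz : L (z ^ 2) = 0
    · rw [hker a z hz, hz, mul_zero, abs_zero]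
    · have hQ := hsq z hz
      have hmem : L (a * z ^ 2) / L (z ^ 2) ∈ Rayleigh L a := ⟨z, hz, rfl⟩
      have h1 : L (a * z ^ 2) / L (z ^ 2) ≤ M :=
        le_trans (le_csSup hbddA hmem) (le_max_left _ _)
      have h2 : -M ≤ L (a * z ^ 2) / L (z ^ 2) := by
        have h3 := csInf_le hbddB hmem
        have h4 := le_max_right (sSup (Rayleigh L a)) (-(sInf (Rayleigh L a)))
        linarith
      rw [abs_le]
      constructor
      · have := (le_div_iff₀ hQ).1 h2
        linarith
      · exact (div_le_iff₀ hQ).1 h1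
  have hpolar : ∀ x y : A,
      L (a * (x * y)) + L (a * (x * y)) ≤ M * (L (x ^ 2) + L (y ^ 2)) := by
    intro x y
    have h1 := hMabs (x + y)
    have h2 := hMabs (x - y)
    rw [show a * (x + y) ^ 2 = a * x ^ 2 + (a * (x * y) + a * (x * y)) + a * y ^ 2 from by ring,
      show (x + y) ^ 2 = x ^ 2 + (x * y + x * y) + y ^ 2 from by ring] at h1
    rw [show a * (x - y) ^ 2 = a * x ^ 2 - (a * (x * y) + a * (x * y)) + a * y ^ 2 from by ring,
      show (x - y) ^ 2 = x ^ 2 - (x * y + x * y) + y ^ 2 from by ring] at h2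
    simp only [map_add, map_sub] at h1 h2
    have h1' := (abs_le.1 h1).2
    have h2' := (abs_le.1 h2).1
    nlinarith [h1', h2']
  have hsqb : ∀ x : A, L (a ^ 2 * x ^ 2) ≤ M ^ 2 * L (x ^ 2) := by
    intro x
    have hQ0 : 0 ≤ L (x ^ 2) := hpsd x
    by_cases hQz : L (x ^ 2) = 0
    · rw [hker (a ^ 2) x hQz, hQz, mul_zero]
    · have hQpos : 0 < L (x ^ 2) := hsq x hQz
      rcases le_or_gt (L (a ^ 2 * x ^ 2)) 0 with hP | hP
      · exact le_trans hP (mul_nonneg (sq_nonneg M) hQ0)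
      · have key : ∀ t : ℝ, t * L (a ^ 2 * x ^ 2) + t * L (a ^ 2 * x ^ 2)
            ≤ M * (L (x ^ 2) + t * t * L (a ^ 2 * x ^ 2)) := by
          intro t
          have hp := hpolar x (t • (a * x))
          have e1 : a * (x * (t • (a * x))) = t • (a ^ 2 * x ^ 2) := by
            rw [mul_smul_comm, mul_smul_comm]
            congr 1
            ring
          have e2 : (t • (a * x)) ^ 2 = (t * t) • (a ^ 2 * x ^ 2) := by
            rw [smul_pow, show (a * x) ^ 2 = a ^ 2 * x ^ 2 from by ring,
              show t ^ 2 = t * t from pow_two t]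
          rw [e1, e2] at hp
          simp only [map_smul, smul_eq_mul] at hp
          linarith [hp]
        set P := L (a ^ 2 * x ^ 2) with hPdef
        set Q := L (x ^ 2) with hQdef
        have hQP : 0 < Q * P := mul_pos hQpos hP
        set t := Real.sqrt (Q * P) / P with htdef
        have htP : t * P = Real.sqrt (Q * P) := div_mul_cancel₀ _ (ne_of_gt hP)
        have htt : t * t * P = Q := by
          have h1 : t * t * P = Real.sqrt (Q * P) * Real.sqrt (Q * P) / P := by
            rw [htdef]; field_simp
          rw [h1, Real.mul_self_sqrt hQP.le]
          exact mul_div_cancel_right₀ Q (ne_of_gt hP)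
        have h := key t
        rw [htt] at h
        rw [htP] at h
        have h1 : Real.sqrt (Q * P) ≤ M * Q := by linarith
        have h2 := mul_self_le_mul_self (Real.sqrt_nonneg (Q * P)) h1
        rw [Real.mul_self_sqrt hQP.le] at h2
        have h3 : Q * P ≤ Q * (M ^ 2 * Q) := by
          calc Q * P ≤ M * Q * (M * Q) := h2
            _ = Q * (M ^ 2 * Q) := by ring
        exact le_of_mul_le_mul_left h3 hQpos
  have hiter : ∀ n : ℕ, ∀ x : A, L (a ^ (2 * n) * x ^ 2) ≤ M ^ (2 * n) * L (x ^ 2) := by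
    intro n
    induction n with
    | zero => intro x; simp
    | succ n ih =>
      intro x
      have e : a ^ (2 * (n + 1)) * x ^ 2 = a ^ (2 * n) * (a * x) ^ 2 := by ring
      rw [e]
      calc L (a ^ (2 * n) * (a * x) ^ 2) ≤ M ^ (2 * n) * L ((a * x) ^ 2) := ih (a * x)
        _ ≤ M ^ (2 * n) * (M ^ 2 * L (x ^ 2)) := by
            apply mul_le_mul_of_nonneg_left _ (pow_nonneg hM0 _)
            rw [show (a * x) ^ 2 = a ^ 2 * x ^ 2 from by ring]
            exact hsqb x
        _ = M ^ (2 * (n + 1)) * L (x ^ 2) := by ring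
  have hCM : C ≤ M := by
    apply csSup_le hCset_ne
    rintro s ⟨n, hn, rfl⟩
    have hb := hiter n 1
    rw [one_pow, mul_one, hone, mul_one] at hb
    have h2n : (2 * n : ℕ) ≠ 0 := by omega
    calc (L (a ^ (2 * n))) ^ (((2 * n : ℕ) : ℝ))⁻¹
        ≤ (M ^ (2 * n)) ^ (((2 * n : ℕ) : ℝ))⁻¹ :=
          Real.rpow_le_rpow (hmom_nonneg n) hb (by positivity)
      _ = M := Real.pow_rpow_inv_natCast hM0 h2n
  refine ⟨hbddA, hbddB, hsupC, hinfC, ?_⟩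
  rcases le_total (-(sInf (Rayleigh L a))) (sSup (Rayleigh L a)) with h | h
  · left
    have hM : M = sSup (Rayleigh L a) := max_eq_left h
    exact le_antisymm (hM ▸ hCM) hsupC
  · right
    have hM : M = -(sInf (Rayleigh L a)) := max_eq_right h
    have : -(sInf (Rayleigh L a)) ≤ C := by linarith [hinfC]
    exact le_antisymm (hM ▸ hCM) this
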